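/- Let n ≥ 1 and r ≥ 0, and let D = {λ ∈ ℕ^n : λ_1 + ⋯ + λ_n = r} be the set of n-part compositions of r, viewed as a finite set of points of ℚ^n. Then the vanishing ideal in ℚ[X_1,…,X_n] of D equals the ideal generated by the n+1 polynomials (X_1 + ⋯ + X_n) − r and X_a(X_a − 1)(X_a − 2)⋯(X_a − r) for a = 1,…,n. -/

import Mathlib

noncomputable section Stmt9Aux

open Finset

namespace Stmt9

variable (n r : ℕ)

/-- the one-variable node polynomial `(X-0)(X-1)⋯(X-r)` -/
def g : Polynomial ℚ := ∏ j ∈ Finset.range (r + 1), (Polynomial.X - Polynomial.C (j : ℚ))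

/-- the one-variable Lagrange basis polynomial at node `j` -/
def ell (j : ℕ) : Polynomial ℚ := Lagrange.basis (Finset.range (r + 1)) (fun i => (i : ℚ)) j

lemma v_injOn : Set.InjOn (fun i : ℕ => (i : ℚ)) (Finset.range (r + 1)) :=
  fun a _ b _ h => Nat.cast_injective h

lemma g_monic : (g r).Monic := by
  apply Polynomial.monic_prod_of_monic
  intro j _
  exact Polynomial.monic_X_sub_C _

lemma g_degree : (g r).degree = (r + 1 : ℕ) := by
  rw [g, Polynomial.degree_prod]
  simp only [Polynomial.degree_X_sub_C, Finset.sum_const, Finset.card_range, nsmul_eq_mul,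
    mul_one]

lemma g_eval (j : ℕ) (hj : j ∈ Finset.range (r + 1)) : (g r).eval (j : ℚ) = 0 := by
  rw [g, Polynomial.eval_prod]
  exact Finset.prod_eq_zero hj (by simp)

/-- one-variable interpolation congruence -/
lemma one_var (p : Polynomial ℚ) :
    ∃ h : Polynomial ℚ,
      p = g r * h +
        Lagrange.interpolate (Finset.range (r + 1)) (fun i => (i : ℚ))
          (fun i => p.eval (i : ℚ)) := by
  refine ⟨p /ₘ g r, ?_⟩
  have hmod : p %ₘ g r + g r * (p /ₘ g r) = p := Polynomial.modByMonic_add_div p (g r)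
  have hdeg : (p %ₘ g r).degree < (Finset.range (r + 1)).card := by
    rw [Finset.card_range, ← g_degree r]
    exact Polynomial.degree_modByMonic_lt p (g_monic r)
  have h1 : p %ₘ g r =
      Lagrange.interpolate (Finset.range (r + 1)) (fun i => (i : ℚ))
        (fun i => (p %ₘ g r).eval (i : ℚ)) :=
    Lagrange.eq_interpolate (v_injOn r) hdeg
  have h2 : Lagrange.interpolate (Finset.range (r + 1)) (fun i => (i : ℚ))
        (fun i => (p %ₘ g r).eval (i : ℚ)) =
      Lagrange.interpolate (Finset.range (r + 1)) (fun i => (i : ℚ))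
        (fun i => p.eval (i : ℚ)) := by
    apply Lagrange.interpolate_eq_of_values_eq_on
    intro i hi
    conv_rhs => rw [← hmod]
    simp [g_eval r i hi]
  conv_lhs => rw [← hmod]
  rw [h1, h2, add_comm]

end Stmt9

namespace Stmt9

open MvPolynomial

variable (n r : ℕ)

def G (a : Fin n) : MvPolynomial (Fin n) ℚ :=
  ∏ j ∈ Finset.range (r + 1), (X a - C (j : ℚ))

def E (μ : Fin n → ℕ) : MvPolynomial (Fin n) ℚ :=
  ∏ a, Polynomial.aeval (X a) (ell r (μ a))

def grid : Finset (Fin n → ℕ) := Fintype.piFinset fun _ => Finset.range (r + 1)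

def pt (μ : Fin n → ℕ) : Fin n → ℚ := fun a => (μ a : ℚ)

def I0 : Ideal (MvPolynomial (Fin n) ℚ) := Ideal.span (Set.range (G n r))

lemma eval_aeval (x : Fin n → ℚ) (a : Fin n) (p : Polynomial ℚ) :
    MvPolynomial.eval x (Polynomial.aeval (X a) p) = p.eval (x a) := by
  have h := Polynomial.aeval_algHom_apply
    (MvPolynomial.aeval x : MvPolynomial (Fin n) ℚ →ₐ[ℚ] ℚ) (X a) p
  simp only [MvPolynomial.aeval_X] at h
  rw [← Polynomial.coe_aeval_eq_eval, h]
  rfl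

lemma aeval_g (a : Fin n) : Polynomial.aeval (X a) (g r) = G n r a := by
  simp only [g, G, map_prod, map_sub, Polynomial.aeval_X, Polynomial.aeval_C,
    MvPolynomial.algebraMap_eq]

lemma keyM (κ : Fin n → ℕ) :
    (∏ a, X a ^ κ a) -
      ∑ μ ∈ grid n r, C (∏ a, (μ a : ℚ) ^ κ a) * E n r μ ∈ I0 n r := by
  -- one-variable congruences
  have h1 : ∀ a : Fin n, Ideal.Quotient.mk (I0 n r) (X a ^ κ a) =
      Ideal.Quotient.mk (I0 n r)
        (∑ j ∈ Finset.range (r + 1),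
          C ((j : ℚ) ^ κ a) * Polynomial.aeval (X a) (ell r j)) := by
    intro a
    obtain ⟨h, hh⟩ := one_var r (Polynomial.X ^ κ a)
    have h2 := congrArg (⇑(Polynomial.aeval (X a) : Polynomial ℚ →ₐ[ℚ] MvPolynomial (Fin n) ℚ)) hh
    simp only [map_add, map_mul, map_pow, Polynomial.aeval_X, aeval_g,
      Lagrange.interpolate_apply, map_sum, Polynomial.eval_pow, Polynomial.eval_X,
      Polynomial.aeval_C, MvPolynomial.algebraMap_eq, ell] at h2
    rw [Ideal.Quotient.eq]
    simp only [ell, map_pow]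
    rw [h2, add_sub_cancel_right]
    exact Ideal.mul_mem_right _ _ (Ideal.subset_span ⟨a, rfl⟩)
  rw [← Ideal.Quotient.eq]
  calc Ideal.Quotient.mk (I0 n r) (∏ a, X a ^ κ a)
      = ∏ a, Ideal.Quotient.mk (I0 n r) (X a ^ κ a) := map_prod _ _ _
    _ = ∏ a, Ideal.Quotient.mk (I0 n r)
          (∑ j ∈ Finset.range (r + 1),
            C ((j : ℚ) ^ κ a) * Polynomial.aeval (X a) (ell r j)) := by
        exact Finset.prod_congr rfl fun a _ => h1 a
    _ = Ideal.Quotient.mk (I0 n r)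
          (∏ a, ∑ j ∈ Finset.range (r + 1),
            C ((j : ℚ) ^ κ a) * Polynomial.aeval (X a) (ell r j)) := (map_prod _ _ _).symm
    _ = Ideal.Quotient.mk (I0 n r)
          (∑ μ ∈ grid n r, C (∏ a, (μ a : ℚ) ^ κ a) * E n r μ) := by
        congr 1
        rw [Finset.prod_univ_sum]
        refine Finset.sum_congr rfl fun μ _ => ?_
        rw [Finset.prod_mul_distrib, E, ← map_prod]

lemma keyA (f : MvPolynomial (Fin n) ℚ) :
    f - ∑ μ ∈ grid n r, C (eval (pt n μ) f) * E n r μ ∈ I0 n r := by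
  induction f using MvPolynomial.induction_on' with
  | add p q hp hq =>
      have := Ideal.add_mem _ hp hq
      convert this using 1
      simp only [map_add, C_add, add_mul, Finset.sum_add_distrib]
      ring
  | monomial u c =>
      have hm := keyM n r (fun a => u a)
      have h0 : (monomial u c : MvPolynomial (Fin n) ℚ) = C c * ∏ a, X a ^ u a := by
        rw [monomial_eq, Finsupp.prod_fintype _ _ (fun a => pow_zero _)]
      have := Ideal.mul_mem_left _ (C c) hm
      convert this using 1
      rw [h0, mul_sub]
      congr 1
      rw [Finset.mul_sum]
      refine Finset.sum_congr rfl fun μ _ => ?_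
      rw [← mul_assoc, ← C_mul]
      congr 2
      simp only [eval_mul, eval_C, eval_prod, eval_pow, eval_X]
      rfl

lemma evalE {μ ν : Fin n → ℕ} (hμ : μ ∈ grid n r) (hν : ν ∈ grid n r) :
    eval (pt n ν) (E n r μ) = if μ = ν then 1 else 0 := by
  rw [E, eval_prod]
  simp only [eval_aeval]
  by_cases h : μ = ν
  · subst h
    rw [if_pos rfl]
    refine Finset.prod_eq_one fun a _ => ?_
    exact Lagrange.eval_basis_self (v_injOn r) (Fintype.mem_piFinset.mp hμ a)
  · rw [if_neg h]
    obtain ⟨a, ha⟩ : ∃ a, μ a ≠ ν a := by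
      by_contra hc
      push_neg at hc
      exact h (funext hc)
    refine Finset.prod_eq_zero (Finset.mem_univ a) ?_
    exact Lagrange.eval_basis_of_ne ha (Fintype.mem_piFinset.mp hν a)

end Stmt9

namespace Stmt9

open MvPolynomial

variable (n r : ℕ)

def S : MvPolynomial (Fin n) ℚ := (∑ a, X a) - C (r : ℚ)

def Ifull : Ideal (MvPolynomial (Fin n) ℚ) :=
  Ideal.span ({S n r} ∪ Set.range (G n r))

lemma I0_le : I0 n r ≤ Ifull n r :=
  Ideal.span_mono Set.subset_union_right

lemma eval_S (ν : Fin n → ℕ) : eval (pt n ν) (S n r) = (∑ a, (ν a : ℚ)) - r := by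
  simp [S, pt]

lemma E_mem {μ : Fin n → ℕ} (hμ : μ ∈ grid n r) (hsum : (∑ a, μ a) ≠ r) :
    E n r μ ∈ Ifull n r := by
  have hA := keyA n r (S n r * E n r μ)
  have hcol : ∑ ν ∈ grid n r, C (eval (pt n ν) (S n r * E n r μ)) * E n r ν
      = C ((∑ a, (μ a : ℚ)) - r) * E n r μ := by
    rw [Finset.sum_eq_single_of_mem μ hμ]
    · rw [eval_mul, eval_S, evalE n r hμ hμ, if_pos rfl, mul_one]
    · intro ν hν hne
      rw [eval_mul, evalE n r hμ hν, if_neg fun h => hne h.symm, mul_zero, map_zero, zero_mul]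
  rw [hcol] at hA
  have h1 : S n r * E n r μ ∈ Ifull n r :=
    Ideal.mul_mem_right _ _ (Ideal.subset_span (Or.inl rfl))
  have h2 : C ((∑ a, (μ a : ℚ)) - r) * E n r μ ∈ Ifull n r := by
    have h3 := Ideal.sub_mem _ h1 (I0_le n r hA)
    rwa [sub_sub_cancel] at h3
  have hc : ((∑ a, (μ a : ℚ)) - r) ≠ 0 := by
    intro h
    apply hsum
    have : ((∑ a, μ a : ℕ) : ℚ) = (r : ℚ) := by
      push_cast
      linarith [sub_eq_zero.mp h]
    exact_mod_cast this
  have h4 : E n r μ = C ((∑ a, (μ a : ℚ)) - r)⁻¹ *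
      (C ((∑ a, (μ a : ℚ)) - r) * E n r μ) := by
    rw [← mul_assoc, ← C_mul, inv_mul_cancel₀ hc, C_1, one_mul]
  rw [h4]
  exact Ideal.mul_mem_left _ _ h2

lemma main : MvPolynomial.vanishingIdeal ℚ
      ((fun lam : Fin n → ℕ => fun a : Fin n => (lam a : ℚ)) ''
        {lam : Fin n → ℕ | (∑ a, lam a) = r}) = Ifull n r := by
  apply le_antisymm
  · intro f hf
    rw [MvPolynomial.mem_vanishingIdeal_iff] at hf
    have hsplit : f = (f - ∑ μ ∈ grid n r, C (eval (pt n μ) f) * E n r μ)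
        + ∑ μ ∈ grid n r, C (eval (pt n μ) f) * E n r μ := by ring
    rw [hsplit]
    refine Ideal.add_mem _ (I0_le n r (keyA n r f)) (Ideal.sum_mem _ fun μ hμ => ?_)
    by_cases hs : (∑ a, μ a) = r
    · have h0 : eval (pt n μ) f = 0 := hf _ ⟨μ, hs, rfl⟩
      rw [h0, map_zero, zero_mul]
      exact zero_mem _
    · exact Ideal.mul_mem_left _ _ (E_mem n r hμ hs)
  · rw [Ifull, Ideal.span_le]
    rintro p (hp | ⟨a, rfl⟩)
    · rw [Set.mem_singleton_iff] at hp
      subst hp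
      rw [SetLike.mem_coe, MvPolynomial.mem_vanishingIdeal_iff]
      rintro x ⟨lam, hlam, rfl⟩
      show eval (pt n lam) (S n r) = 0
      rw [eval_S, sub_eq_zero, ← hlam]
      push_cast
      rfl
    · rw [SetLike.mem_coe, MvPolynomial.mem_vanishingIdeal_iff]
      rintro x ⟨lam, hlam, rfl⟩
      show eval (pt n lam) (G n r a) = 0
      rw [G, eval_prod]
      have hle : lam a ≤ r := by
        rw [← hlam]
        exact Finset.single_le_sum (fun i _ => Nat.zero_le _) (Finset.mem_univ a)
      refine Finset.prod_eq_zero (Finset.mem_range.mpr (Nat.lt_succ_of_le hle)) ?_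
      simp [pt]

end Stmt9

end Stmt9Aux

/-- Let `D` be the set of `n`-part compositions of `r`, viewed as points
of `ℚ^n`.  Then the vanishing ideal of `D` in `ℚ[X₁,…,Xₙ]` equals the ideal generated by
`(X₁ + ⋯ + Xₙ) − r` together with `X_a(X_a − 1)⋯(X_a − r)` for `a = 1,…,n`. -/
theorem stmt9 (n r : ℕ) (hn : 1 ≤ n) :
    MvPolynomial.vanishingIdeal ℚ
        ((fun lam : Fin n → ℕ => fun a : Fin n => (lam a : ℚ)) ''
          {lam : Fin n → ℕ | (∑ a, lam a) = r}) =
      Ideal.span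
        ({(∑ a, MvPolynomial.X a) - MvPolynomial.C (r : ℚ)} ∪
          Set.range fun a : Fin n =>
            ∏ j ∈ Finset.range (r + 1),
              (MvPolynomial.X a - MvPolynomial.C (j : ℚ))) := by
  exact Stmt9.main n r
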